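/- Let X_{r,β} be the n×n lower-triangular Toeplitz matrix with entries (X_{r,β})_{ij} = 0 if i < j, r^{n-1} if i = j, and β r^{n-(i-j+1)} if i > j. If β = 1 - r² with 0 < r ≤ 1, then the spectral norm of X_{r,β} equals 1. -/

import Mathlib

open scoped Matrix.Norms.L2Operator

noncomputable def Xmat (n : ℕ) (r beta : ℝ) : Matrix (Fin n) (Fin n) ℝ :=
  Matrix.of fun i j =>
    if (i : ℕ) < (j : ℕ) then 0
    else if i = j then r ^ (n - 1)
    else beta * r ^ (n - ((i : ℕ) - (j : ℕ) + 1))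

open Matrix

lemma geom_aux (x : ℝ) (M : ℕ) : (1 - x) * ∑ m ∈ Finset.range M, x ^ m = 1 - x ^ M := by
  have h := geom_sum_mul x M
  linear_combination -h

private def hfun (n : ℕ) (r : ℝ) (j k : ℕ) : ℕ → ℝ := fun i =>
  if i < k then 0
  else if i = k then (if j = k then r ^ (n-1) * r ^ (n-1)
      else ((1 - r^2) * r ^ (n - (k - j + 1))) * r ^ (n-1))
  else ((1 - r^2) * r ^ (n - (i - j + 1))) * ((1 - r^2) * r ^ (n - (i - k + 1)))

lemma step1 (n : ℕ) (r : ℝ) (j k : Fin n) (hjk : (j:ℕ) ≤ (k:ℕ)) (i : Fin n) :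
    Xmat n r (1 - r^2) i j * Xmat n r (1 - r^2) i k = hfun n r j k i := by
  rcases lt_trichotomy (i:ℕ) (k:ℕ) with h1 | h1 | h1
  · rw [hfun, if_pos h1]
    have : Xmat n r (1 - r^2) i k = 0 := by
      simp only [Xmat, Matrix.of_apply, if_pos h1]
    rw [this, mul_zero]
  · rw [hfun, if_neg (by omega), if_pos h1]
    by_cases h2 : (j:ℕ) = (k:ℕ)
    · rw [if_pos h2]
      have hij : i = j := by apply Fin.ext; omega
      have hik : i = k := by apply Fin.ext; omega
      subst hij
      simp only [Xmat, Matrix.of_apply, if_neg (by omega : ¬ ((i:ℕ) < (i:ℕ))), if_pos rfl,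
        if_neg (by omega : ¬ ((i:ℕ) < (k:ℕ))), if_pos hik, if_true]
    · rw [if_neg h2]
      have hik : i = k := by apply Fin.ext; omega
      subst hik
      have hj : ¬ (i = j) := by intro e; exact h2 (by rw [e])
      simp only [Xmat, Matrix.of_apply, if_neg (by omega : ¬ ((i:ℕ) < (j:ℕ))), if_neg hj,
        if_neg (by omega : ¬ ((i:ℕ) < (i:ℕ))), if_pos rfl, if_true]
  · rw [hfun, if_neg (by omega), if_neg (by omega)]
    have hj : ¬ (i = j) := by intro e; rw [e] at h1; omega
    have hk : ¬ (i = k) := by intro e; rw [e] at h1; omega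
    simp only [Xmat, Matrix.of_apply, if_neg (by omega : ¬ ((i:ℕ) < (j:ℕ))), if_neg hj,
      if_neg (by omega : ¬ ((i:ℕ) < (k:ℕ))), if_neg hk]

lemma entry_aux (n : ℕ) (r : ℝ) (j k : Fin n) (hjk : (j:ℕ) ≤ (k:ℕ)) :
    ∑ i : Fin n, Xmat n r (1 - r^2) i j * Xmat n r (1 - r^2) i k
      = (if j = k then r ^ (2*n) else 0) + (1 - r^2) * (r ^ (j:ℕ) * r ^ (k:ℕ)) := by
  have hk : (k:ℕ) < n := k.isLt
  have h0 : ∑ i : Fin n, Xmat n r (1 - r^2) i j * Xmat n r (1 - r^2) i k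
      = ∑ i ∈ Finset.range n, hfun n r j k i := by
    rw [← Fin.sum_univ_eq_sum_range]
    exact Finset.sum_congr rfl (fun i _ => step1 n r j k hjk i)
  rw [h0, ← Finset.sum_range_add_sum_Ico _ hk.le,
    Finset.sum_eq_zero (fun i hi => by
      rw [hfun, if_pos (Finset.mem_range.mp hi)]), zero_add,
    Finset.sum_eq_sum_Ico_succ_bot hk, Finset.sum_Ico_eq_sum_range]
  have hterm : ∀ t ∈ Finset.range (n - ((k:ℕ)+1)), hfun n r j k ((k:ℕ)+1+t)
      = ((1-r^2) * r^((j:ℕ)+(k:ℕ))) * ((1-r^2) * (r^2)^(n-((k:ℕ)+1)-1-t)) := by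
    intro t ht
    have ht' := Finset.mem_range.mp ht
    rw [hfun, if_neg (by omega), if_neg (by omega)]
    have e : r ^ (n - ((k:ℕ)+1+t-(j:ℕ)+1)) * r ^ (n - ((k:ℕ)+1+t-(k:ℕ)+1))
        = r ^ ((j:ℕ)+(k:ℕ)) * (r^2)^(n-((k:ℕ)+1)-1-t) := by
      rw [← pow_mul, ← pow_add, ← pow_add]
      congr 1
      omega
    linear_combination (1-r^2)^2 * e
  rw [Finset.sum_congr rfl hterm, ← Finset.mul_sum, ← Finset.mul_sum,
    Finset.sum_range_reflect (fun t => (r^2)^t) (n - ((k:ℕ)+1)), geom_aux]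
  rw [hfun, if_neg (by omega), if_pos rfl]
  by_cases h2 : (j:ℕ) = (k:ℕ)
  · have hjk' : j = k := Fin.ext h2
    rw [if_pos h2, if_pos hjk']
    have f1 : r^(n-1) * r^(n-1) = r^(2*n-2) := by rw [← pow_add]; congr 1; omega
    have f2 : r^((j:ℕ)+(k:ℕ)) * (r^2)^(n-((k:ℕ)+1)) = r^(2*n-2) := by
      rw [← pow_mul, ← pow_add]; congr 1; omega
    have f3 : r^(2*n) = r^2 * r^(2*n-2) := by rw [← pow_add]; congr 1; omega
    have f4 : r^(j:ℕ) * r^(k:ℕ) = r^((j:ℕ)+(k:ℕ)) := by rw [← pow_add]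
    linear_combination f1 - (1-r^2)*f2 - f3 - (1-r^2)*f4
  · have hjk' : ¬ j = k := fun e => h2 (by rw [e])
    rw [if_neg h2, if_neg hjk']
    have g1 : r^(n-((k:ℕ)-(j:ℕ)+1)) * r^(n-1) = r^((j:ℕ)+(k:ℕ)) * (r^2)^(n-((k:ℕ)+1)) := by
      rw [← pow_mul, ← pow_add, ← pow_add]; congr 1; omega
    have g2 : r^(j:ℕ) * r^(k:ℕ) = r^((j:ℕ)+(k:ℕ)) := by rw [← pow_add]
    linear_combination (1-r^2)*g1 + (1-r^2)*g2

lemma key_id (n : ℕ) (r : ℝ) :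
    (Xmat n r (1 - r^2))ᵀ * Xmat n r (1 - r^2)
      = r^(2*n) • (1 : Matrix (Fin n) (Fin n) ℝ)
        + (1 - r^2) • Matrix.vecMulVec (fun i : Fin n => r^(i:ℕ)) (fun i : Fin n => r^(i:ℕ)) := by
  ext j k
  have lhs : ((Xmat n r (1 - r^2))ᵀ * Xmat n r (1 - r^2)) j k
      = ∑ i : Fin n, Xmat n r (1 - r^2) i j * Xmat n r (1 - r^2) i k := by
    simp [Matrix.mul_apply, Matrix.transpose_apply]
  have rhs : (r^(2*n) • (1 : Matrix (Fin n) (Fin n) ℝ)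
        + (1 - r^2) • Matrix.vecMulVec (fun i : Fin n => r^(i:ℕ)) (fun i : Fin n => r^(i:ℕ))) j k
      = (if j = k then r ^ (2*n) else 0) + (1 - r^2) * (r ^ (j:ℕ) * r ^ (k:ℕ)) := by
    simp [Matrix.one_apply, Matrix.vecMulVec_apply, mul_ite]
  rw [lhs, rhs]
  rcases le_total (j:ℕ) (k:ℕ) with h | h
  · exact entry_aux n r j k h
  · have := entry_aux n r k j h
    calc ∑ i : Fin n, Xmat n r (1 - r^2) i j * Xmat n r (1 - r^2) i k
        = ∑ i : Fin n, Xmat n r (1 - r^2) i k * Xmat n r (1 - r^2) i j := by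
          exact Finset.sum_congr rfl fun i _ => mul_comm _ _
      _ = (if k = j then r ^ (2*n) else 0) + (1 - r^2) * (r ^ (k:ℕ) * r ^ (j:ℕ)) := this
      _ = (if j = k then r ^ (2*n) else 0) + (1 - r^2) * (r ^ (j:ℕ) * r ^ (k:ℕ)) := by
          rw [mul_comm (r ^ (k:ℕ))]
          congr 1
          simp [eq_comm]

lemma quad_id (n : ℕ) (r : ℝ) (x : Fin n → ℝ) :
    (Xmat n r (1 - r^2) *ᵥ x) ⬝ᵥ (Xmat n r (1 - r^2) *ᵥ x)
      = r^(2*n) * (x ⬝ᵥ x) + (1 - r^2) * ((fun i : Fin n => r^(i:ℕ)) ⬝ᵥ x)^2 := by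
  set w : Fin n → ℝ := fun i : Fin n => r^(i:ℕ) with hw
  have hvmv : Matrix.vecMulVec w w *ᵥ x = (w ⬝ᵥ x) • w := by
    ext i
    simp [Matrix.vecMulVec_apply, Matrix.mulVec, dotProduct, Finset.mul_sum,
      mul_comm, mul_assoc, mul_left_comm]
  rw [Matrix.dotProduct_mulVec, ← Matrix.mulVec_transpose, Matrix.mulVec_mulVec, key_id,
    Matrix.add_mulVec, Matrix.smul_mulVec, Matrix.one_mulVec, Matrix.smul_mulVec,
    hvmv, add_dotProduct, smul_dotProduct, smul_dotProduct,
    smul_dotProduct]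
  simp only [smul_eq_mul]
  ring

lemma wsum_id (n : ℕ) (r : ℝ) :
    (1 - r^2) * ((fun i : Fin n => r^(i:ℕ)) ⬝ᵥ (fun i : Fin n => r^(i:ℕ))) = 1 - r^(2*n) := by
  have : ((fun i : Fin n => r^(i:ℕ)) ⬝ᵥ (fun i : Fin n => r^(i:ℕ)))
      = ∑ i ∈ Finset.range n, (r^2)^i := by
    rw [← Fin.sum_univ_eq_sum_range (fun i => (r^2)^i) n]
    refine Finset.sum_congr rfl fun i _ => ?_
    rw [← pow_mul, ← pow_add]
    congr 1
    omega
  rw [this, geom_aux, ← pow_mul]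

/-- If `β = 1 - r²` then `‖X_{r,β}‖ = 1`. -/
theorem stmt4 (n : ℕ) (hn : 0 < n) (r : ℝ) (hr0 : 0 < r) (hr1 : r ≤ 1) :
    ‖Xmat n r (1 - r ^ 2)‖ = 1 := by
  have hb : (0:ℝ) ≤ 1 - r^2 := by nlinarith
  set A := Xmat n r (1 - r ^ 2) with hA
  set w : Fin n → ℝ := fun i : Fin n => r^(i:ℕ) with hw
  rw [Matrix.l2_opNorm_def]
  set T := (Matrix.toEuclideanLin.trans LinearMap.toContinuousLinearMap) A with hT
  have happ : ∀ (x : EuclideanSpace ℝ (Fin n)) (i : Fin n), T x i = (A *ᵥ (fun j => x j)) i :=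
    fun x i => rfl
  have hsq : ∀ y : Fin n → ℝ, ∑ i : Fin n, y i ^ 2 = y ⬝ᵥ y := by
    intro y; simp [dotProduct, sq]
  have hnorm : ∀ (x : EuclideanSpace ℝ (Fin n)), ‖x‖ = Real.sqrt ((fun i => x i) ⬝ᵥ (fun i => x i)) := by
    intro x
    rw [EuclideanSpace.norm_eq, ← hsq]
    congr 1
    refine Finset.sum_congr rfl fun i _ => ?_
    rw [Real.norm_eq_abs, sq_abs]
  have hTnorm : ∀ (x : EuclideanSpace ℝ (Fin n)),
      ‖T x‖ = Real.sqrt ((A *ᵥ (fun j => x j)) ⬝ᵥ (A *ᵥ (fun j => x j))) := by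
    intro x
    rw [hnorm]
    congr 1
  have key : ∀ x : Fin n → ℝ,
      (A *ᵥ x) ⬝ᵥ (A *ᵥ x) = r^(2*n) * (x ⬝ᵥ x) + (1 - r^2) * (w ⬝ᵥ x)^2 :=
    fun x => quad_id n r x
  have hws := wsum_id n r
  refine le_antisymm (ContinuousLinearMap.opNorm_le_bound _ zero_le_one fun x => ?_) ?_
  · rw [one_mul, hTnorm, hnorm]
    apply Real.sqrt_le_sqrt
    rw [key]
    have hcs : (w ⬝ᵥ (fun j => x j))^2 ≤ (w ⬝ᵥ w) * ((fun j => x j) ⬝ᵥ (fun j => x j)) := by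
      have := Finset.sum_mul_sq_le_sq_mul_sq Finset.univ w (fun j => x j)
      simpa [dotProduct, sq] using this
    have hxx : (0:ℝ) ≤ (fun j => x j) ⬝ᵥ (fun j => x j) := by
      rw [← hsq]; positivity
    nlinarith [sq_nonneg (w ⬝ᵥ fun j => x j), pow_pos hr0 (2*n)]
  · have hTv : ‖T ((WithLp.equiv 2 (Fin n → ℝ)).symm w)‖ = ‖(WithLp.equiv 2 (Fin n → ℝ)).symm w‖ := by
      rw [hTnorm, hnorm]
      congr 1
      have hww : ∀ i, ((WithLp.equiv 2 (Fin n → ℝ)).symm w) i = w i := fun i => rfl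
      simp only [hww]
      rw [key]
      have hws' : (1 - r^2) * (w ⬝ᵥ w) = 1 - r^(2*n) := hws
      show r ^ (2*n) * (w ⬝ᵥ w) + (1 - r^2) * (w ⬝ᵥ w)^2 = w ⬝ᵥ w
      linear_combination (w ⬝ᵥ w) * hws'
    have hvpos : (0:ℝ) < ‖(WithLp.equiv 2 (Fin n → ℝ)).symm w‖ := by
      rw [norm_pos_iff]
      intro h
      have h0 : ((WithLp.equiv 2 (Fin n → ℝ)).symm w) ⟨0, hn⟩ = 0 := by rw [h]; rfl
      have h1 : ((WithLp.equiv 2 (Fin n → ℝ)).symm w) ⟨0, hn⟩ = 1 := by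
        show w ⟨0, hn⟩ = 1
        simp [hw]
      rw [h0] at h1
      exact one_ne_zero h1.symm
    have hle := T.le_opNorm ((WithLp.equiv 2 (Fin n → ℝ)).symm w)
    rw [hTv] at hle
    exact le_of_mul_le_mul_right (by linarith) hvpos
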